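/- Let H=⋃_{n≥1}H_n be an increasing union of finite groups acting on a measure space (Y,ν) by measure-preserving transformations, and suppose that the orbit H·y is infinite for ν-almost every y∈Y. Then lim_{n→∞} (1/|H_n|) Σ_{h∈H_n} ν(Fix_Y(h)) = 0, and the sequence n ↦ (1/|H_n|) Σ_{h∈H_n} ν(Fix_Y(h)) is monotone (non-increasing). -/

import Mathlib

open MeasureTheory Filter
open scoped ENNReal ComplexOrder

noncomputable section

/-- A Bratteli diagram: vertex levels `V i`, edge levels `E i` (edges from `V i` to `V (i+1)`),
all levels finite and nonempty, a single root vertex, and source/range maps that are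
surjective (every vertex emits and receives an edge). -/
structure BratteliDiagram where
  V : ℕ → Type
  E : ℕ → Type
  fintypeV : ∀ i, Fintype (V i)
  fintypeE : ∀ i, Fintype (E i)
  nonemptyV : ∀ i, Nonempty (V i)
  nonemptyE : ∀ i, Nonempty (E i)
  subsingleton_root : Subsingleton (V 0)
  src : ∀ i, E i → V i
  rng : ∀ i, E i → V (i + 1)
  src_surj : ∀ i, Function.Surjective (src i)
  rng_surj : ∀ i, Function.Surjective (rng i)

namespace BratteliDiagram

variable (B : BratteliDiagram)

/-- The path space `X_B`: infinite paths starting at the root. -/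
def Path : Type :=
  { x : ∀ i, B.E i // ∀ i, B.rng i (x i) = B.src (i + 1) (x (i + 1)) }

instance (i : ℕ) : UniformSpace (B.E i) := ⊥

instance instUniformSpacePath : UniformSpace B.Path :=
  inferInstanceAs (UniformSpace { x : ∀ i, B.E i // ∀ i, B.rng i (x i) = B.src (i + 1) (x (i + 1)) })

instance instMeasurableSpacePath : MeasurableSpace B.Path := borel _

/-- Finite segments of `L+1` consecutive edges starting at level `n`. -/
def Seg (n L : ℕ) : Type :=
  { f : ∀ i : Fin (L + 1), B.E (n + (i : ℕ)) //
    ∀ (i : ℕ) (hi : i < L),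
      B.rng (n + i) (f ⟨i, by omega⟩) = B.src (n + (i + 1)) (f ⟨i + 1, by omega⟩) }

/-- The number of finite paths connecting `v ∈ V n` to `w ∈ V (n + L + 1)`. -/
def numPaths (n L : ℕ) (v : B.V n) (w : B.V (n + L + 1)) : ℕ :=
  Nat.card { f : B.Seg n L //
    B.src n (f.1 ⟨0, by omega⟩) = v ∧ B.rng (n + L) (f.1 ⟨L, by omega⟩) = w }

/-- A Bratteli diagram is simple if every vertex of a given level is connected
to every vertex of some deeper level. -/
def IsSimple : Prop :=
  ∀ n : ℕ, ∃ L : ℕ, ∀ (v : B.V n) (w : B.V (n + L + 1)), 0 < B.numPaths n L v w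

/-- A Bratteli diagram is even if every vertex of a given level is connected to every
vertex of some deeper level by a (positive) even number of paths. -/
def IsEven : Prop :=
  ∀ n : ℕ, ∃ L : ℕ, ∀ (v : B.V n) (w : B.V (n + L + 1)),
    0 < B.numPaths n L v w ∧ Even (B.numPaths n L v w)

/-- A permutation of the path space "of level `n`": it changes only the first `n` edges,
and what it does to the first `n` edges depends only on the first `n` edges. -/
def IsLevel (n : ℕ) (g : Equiv.Perm B.Path) : Prop :=
  (∀ (x : B.Path) (i : ℕ), n ≤ i → (g x).1 i = x.1 i) ∧
  (∀ x y : B.Path, (∀ i : ℕ, i < n → x.1 i = y.1 i) → ∀ i : ℕ, i < n → (g x).1 i = (g y).1 i)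

theorem isLevel_one (n : ℕ) : B.IsLevel n 1 :=
  ⟨fun _ _ _ => rfl, fun _ _ h i hi => h i hi⟩

theorem IsLevel.mul {n : ℕ} {a b : Equiv.Perm B.Path} (ha : B.IsLevel n a)
    (hb : B.IsLevel n b) : B.IsLevel n (a * b) := by
  constructor
  · intro x i hi
    have h1 := ha.1 (b x) i hi
    have h2 := hb.1 x i hi
    simpa [Equiv.Perm.mul_apply] using h1.trans h2
  · intro x y hxy i hi
    have h2 := hb.2 x y hxy
    have := ha.2 (b x) (b y) h2 i hi
    simpa [Equiv.Perm.mul_apply] using this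

theorem IsLevel.mono {n m : ℕ} (hnm : n ≤ m) {g : Equiv.Perm B.Path}
    (h : B.IsLevel n g) : B.IsLevel m g := by
  refine ⟨fun x i hi => h.1 x i (hnm.trans hi), fun x y hxy i hi => ?_⟩
  rcases lt_or_ge i n with h' | h'
  · exact h.2 x y (fun j hj => hxy j (hj.trans_le hnm)) i h'
  · rw [h.1 x i h', h.1 y i h']
    exact hxy i hi

/-- The group `G_n` of homeomorphisms of the path space permuting only the
first `n` edges of infinite paths. -/
def level (n : ℕ) : Subgroup (Equiv.Perm B.Path) where
  carrier := { g | B.IsLevel n g ∧ B.IsLevel n g⁻¹ }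
  one_mem' := ⟨B.isLevel_one n, by simpa using B.isLevel_one n⟩
  mul_mem' := by
    intro a b ha hb
    exact ⟨ha.1.mul B hb.1, by rw [mul_inv_rev]; exact IsLevel.mul B hb.2 ha.2⟩
  inv_mem' := by
    intro a ha
    exact ⟨ha.2, by simpa using ha.1⟩

theorem level_mono {n m : ℕ} (h : n ≤ m) : B.level n ≤ B.level m := by
  intro g hg
  exact ⟨hg.1.mono B h, hg.2.mono B h⟩

/-- The full group `G_B = ⋃ n, G_n` of the Bratteli diagram. -/
def fullGroup : Subgroup (Equiv.Perm B.Path) where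
  carrier := { g | ∃ n, g ∈ B.level n }
  one_mem' := ⟨0, one_mem _⟩
  mul_mem' := by
    rintro a b ⟨n, ha⟩ ⟨m, hb⟩
    exact ⟨max n m, mul_mem (B.level_mono (le_max_left n m) ha)
      (B.level_mono (le_max_right n m) hb)⟩
  inv_mem' := by
    rintro a ⟨n, ha⟩
    exact ⟨n, inv_mem ha⟩

/-- `G_n` viewed as a subgroup of the full group. -/
def levelIn (n : ℕ) : Subgroup ↥B.fullGroup := (B.level n).comap B.fullGroup.subtype

/-- The subgroup `G°(A)` of elements of the full group fixing `A` pointwise. -/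
def Gcirc (A : Set B.Path) : Subgroup ↥B.fullGroup :=
  ⨅ x ∈ A, MulAction.stabilizer ↥B.fullGroup x

/-- `G°_n(A) = G_n ∩ G°(A)`. -/
def GcircN (n : ℕ) (A : Set B.Path) : Subgroup ↥B.fullGroup :=
  B.levelIn n ⊓ B.Gcirc A

end BratteliDiagram

/-- Conjugation of a subgroup: `g • H = gHg⁻¹`. -/
def conjSub {Γ : Type*} [Group Γ] (g : Γ) (H : Subgroup Γ) : Subgroup Γ :=
  Subgroup.map (MulAut.conj g).toMonoidHom H

/-- The Borel structure on the space `Sub(Γ)` of subgroups of `Γ`,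
induced from the product space `{0,1}^Γ` (equivalently `Set Γ`). -/
instance subgroupMeasurableSpace {Γ : Type*} [Group Γ] : MeasurableSpace (Subgroup Γ) :=
  MeasurableSpace.comap (fun H => (H : Set Γ)) inferInstance

namespace BratteliDiagram

variable (B : BratteliDiagram)

/-- `F(A)`: the collection of subgroups of the full group normalized by `G°(A)`. -/
def FF (A : Set B.Path) : Set (Subgroup ↥B.fullGroup) :=
  { H | ∀ g ∈ B.Gcirc A, conjSub g H = H }

end BratteliDiagram

/-- A measure `ν` on `Y` is invariant under the action of `G`. -/
def MeasInv (G : Type*) [Group G] {Y : Type*} [MeasurableSpace Y] [MulAction G Y]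
    (ν : Measure Y) : Prop :=
  ∀ (g : G) (s : Set Y), MeasurableSet s → ν ((fun y => g • y) ⁻¹' s) = ν s

/-- The action of `G` on `(Y, ν)` is ergodic: every invariant measurable set is null or conull. -/
def MeasErg (G : Type*) [Group G] {Y : Type*} [MeasurableSpace Y] [MulAction G Y]
    (ν : Measure Y) : Prop :=
  ∀ s : Set Y, MeasurableSet s → (∀ g : G, (fun y => g • y) ⁻¹' s = s) → ν s = 0 ∨ ν s = 1

/-- An invariant random subgroup: a conjugation-invariant Borel probability measure on `Sub(G)`. -/
def IsIRS (G : Type*) [Group G] (φ : Measure (Subgroup G)) : Prop :=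
  IsProbabilityMeasure φ ∧
    ∀ (g : G) (s : Set (Subgroup G)), MeasurableSet s → φ (conjSub g ⁻¹' s) = φ s

/-- An ergodic invariant random subgroup. -/
def IsErgodicIRS (G : Type*) [Group G] (φ : Measure (Subgroup G)) : Prop :=
  IsIRS G φ ∧
    ∀ s : Set (Subgroup G), MeasurableSet s → (∀ g : G, conjSub g ⁻¹' s = s) →
      φ s = 0 ∨ φ s = 1

/-- A character of a group: normalized, central, positive semidefinite complex function. -/
def IsCharacter (G : Type*) [Group G] (χ : G → ℂ) : Prop :=
  χ 1 = 1 ∧ (∀ a b : G, χ (a * b) = χ (b * a)) ∧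
    ∀ (n : ℕ) (g : Fin n → G) (c : Fin n → ℂ),
      0 ≤ ∑ i, ∑ j, (starRingEnd ℂ) (c i) * c j * χ (g i * (g j)⁻¹)

namespace BratteliDiagram

variable (B : BratteliDiagram)

/-- The product measure `μ_α = μ_1^{α_1} × ⋯ × μ_k^{α_k}` on `X^{|α|}`,
realized on the index type `Σ i : Fin k, Fin (α i)` (of cardinality `|α| = Σ α i`). -/
def prodMeasure {k : ℕ} (μ : Fin k → Measure B.Path) (α : Fin k → ℕ) :
    Measure ((Σ i : Fin k, Fin (α i)) → B.Path) :=
  Measure.pi fun p => μ p.1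

/-- The stabilizer distribution `φ_α` of the diagonal action of the full group
on `(X^{|α|}, μ_α)`. -/
def stabDist {k : ℕ} (μ : Fin k → Measure B.Path) (α : Fin k → ℕ) :
    Measure (Subgroup ↥B.fullGroup) :=
  Measure.map (fun y => MulAction.stabilizer ↥B.fullGroup y) (B.prodMeasure μ α)

end BratteliDiagram

open MulAction

private lemma aux_card_orbit_stab {K Z : Type*} [Group K] [MulAction K Z] (y : Z) :
    Nat.card (orbit K y) * Nat.card (stabilizer K y) = Nat.card K := by
  rw [← Nat.card_prod]
  exact Nat.card_congr (orbitProdStabilizerEquivGroup K y)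

private lemma aux_sum_indicator {G Z : Type*} [Group G] [MulAction G Z] (K : Subgroup G)
    [Fintype K] (y : Z) :
    (∑ h : ↥K, Set.indicator {z : Z | (h : G) • z = z} (1 : Z → ℝ) y) / (Nat.card ↥K : ℝ)
      = (Nat.card (orbit ↥K y) : ℝ)⁻¹ := by
  classical
  have hsum : (∑ h : ↥K, Set.indicator {z : Z | (h : G) • z = z} (1 : Z → ℝ) y)
      = Nat.card (stabilizer ↥K y) := by
    simp only [Set.indicator_apply, Set.mem_setOf_eq, Pi.one_apply]
    rw [Finset.sum_boole, Nat.card_eq_fintype_card]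
    norm_cast
    rw [Fintype.card_subtype]
    apply Finset.card_bij (fun h _ => h) <;>
      simp [MulAction.mem_stabilizer_iff, Subgroup.smul_def]
  haveI : Finite (orbit ↥K y) := (Set.finite_range _).to_subtype
  haveI : Nonempty (orbit ↥K y) := ⟨⟨y, mem_orbit_self y⟩⟩
  have horb : (0:ℝ) < Nat.card (orbit ↥K y) := by exact_mod_cast Nat.card_pos
  have hstab : (0:ℝ) < Nat.card (stabilizer ↥K y) := by exact_mod_cast Nat.card_pos
  rw [hsum, ← aux_card_orbit_stab (K := ↥K) y, Nat.cast_mul, mul_comm,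
    div_mul_eq_div_div, div_self hstab.ne', one_div]

private lemma aux_orbit_mono {G Z : Type*} [Group G] [MulAction G Z] {K L : Subgroup G}
    (h : K ≤ L) (y : Z) : orbit ↥K y ⊆ orbit ↥L y := by
  rintro _ ⟨g, rfl⟩
  exact ⟨⟨g.1, h g.2⟩, rfl⟩


/-- if an increasing union `H = ⋃ H n` of finite groups acts on a probability
space with almost every orbit infinite, then the averages of the measures of fixed-point sets
over `H n` tend to `0` monotonically (non-increasingly). -/
theorem average_fixed_points_tendsto_zero {G Y : Type*} [Group G] [MulAction G Y]
    [MeasurableSpace Y] (ν : Measure Y) [IsProbabilityMeasure ν]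
    (H : ℕ → Subgroup G) (hmono : Monotone H) [∀ n, Fintype ↥(H n)]
    (hunion : ∀ g : G, ∃ n, g ∈ H n)
    (hmp : ∀ (g : G) (s : Set Y), MeasurableSet s → ν ((fun y => g • y) ⁻¹' s) = ν s)
    (hmeas : ∀ g : G, MeasurableSet {y : Y | g • y = y})
    (hinf : ∀ᵐ y ∂ν, (MulAction.orbit G y).Infinite) :
    Filter.Tendsto
      (fun n => (∑ h : ↥(H n), (ν {y : Y | (h : G) • y = y}).toReal) / (Nat.card ↥(H n) : ℝ))
      Filter.atTop (nhds 0) ∧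
    Antitone
      (fun n => (∑ h : ↥(H n), (ν {y : Y | (h : G) • y = y}).toReal) / (Nat.card ↥(H n) : ℝ)) := by
  classical
  set F : ℕ → Y → ℝ := fun n y =>
    (∑ h : ↥(H n), Set.indicator {z : Y | (h : G) • z = z} (1 : Y → ℝ) y) / (Nat.card ↥(H n) : ℝ)
    with hF
  have hFeq : ∀ n y, F n y = (Nat.card (orbit ↥(H n) y) : ℝ)⁻¹ := fun n y =>
    aux_sum_indicator (H n) y
  have hIntInd : ∀ (n : ℕ) (h : ↥(H n)),
      Integrable (Set.indicator {z : Y | (h : G) • z = z} (1 : Y → ℝ)) ν := fun n h =>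
    (integrable_const (1:ℝ)).indicator (hmeas _)
  have hInt : ∀ n, Integrable (F n) ν := fun n =>
    (integrable_finset_sum _ fun h _ => hIntInd n h).div_const _
  have hval : ∀ n, (∑ h : ↥(H n), (ν {y : Y | (h : G) • y = y}).toReal) / (Nat.card ↥(H n) : ℝ)
      = ∫ y, F n y ∂ν := by
    intro n
    rw [hF]
    simp only
    rw [integral_div, integral_finset_sum _ fun h _ => hIntInd n h]
    congr 1
    refine Finset.sum_congr rfl fun h _ => ?_
    rw [integral_indicator_one (hmeas _)]; rfl
  -- finiteness/nonemptiness of orbits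
  have hfin : ∀ (n : ℕ) (y : Y), Finite (orbit ↥(H n) y) := fun n y =>
    (Set.finite_range _).to_subtype
  have hpos : ∀ (n : ℕ) (y : Y), 0 < Nat.card (orbit ↥(H n) y) := by
    intro n y
    haveI := hfin n y
    haveI : Nonempty (orbit ↥(H n) y) := ⟨⟨y, mem_orbit_self y⟩⟩
    exact Nat.card_pos
  have hptmono : ∀ {n m : ℕ}, n ≤ m → ∀ y : Y, F m y ≤ F n y := by
    intro n m hnm y
    rw [hFeq, hFeq]
    haveI := hfin m y
    have hsub := aux_orbit_mono (hmono hnm) y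
    have hle : Nat.card (orbit ↥(H n) y) ≤ Nat.card (orbit ↥(H m) y) :=
      Nat.card_mono (Set.toFinite _) hsub
    have h0 : (0:ℝ) < Nat.card (orbit ↥(H n) y) := by exact_mod_cast hpos n y
    exact inv_anti₀ h0 (by exact_mod_cast hle)
  have hbound : ∀ n y, ‖F n y‖ ≤ 1 := by
    intro n y
    rw [hFeq, Real.norm_eq_abs, abs_of_nonneg (by positivity)]
    have h1 : (1:ℝ) ≤ Nat.card (orbit ↥(H n) y) := by exact_mod_cast hpos n y
    calc (Nat.card (orbit ↥(H n) y) : ℝ)⁻¹ ≤ 1⁻¹ := inv_anti₀ one_pos h1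
    _ = 1 := inv_one
  -- a.e. pointwise convergence to 0
  have hlim : ∀ᵐ y ∂ν, Tendsto (fun n => F n y) atTop (nhds 0) := by
    filter_upwards [hinf] with y hy
    have hcard : Tendsto (fun n => (Nat.card (orbit ↥(H n) y) : ℝ)) atTop atTop := by
      refine tendsto_natCast_atTop_atTop.comp (tendsto_atTop_atTop.mpr fun N => ?_)
      obtain ⟨t, hts, htcard⟩ := hy.exists_subset_card_eq N
      have hex : ∀ z ∈ t, ∃ n, z ∈ orbit ↥(H n) y := by
        intro z hz
        obtain ⟨g, rfl⟩ := hts hz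
        obtain ⟨n, hn⟩ := hunion g
        exact ⟨n, ⟨⟨g, hn⟩, rfl⟩⟩
      choose f hf using hex
      refine ⟨t.attach.sup fun z => f z.1 z.2, fun n hn => ?_⟩
      have hsub : (t : Set Y) ⊆ orbit ↥(H n) y := by
        intro z hz
        refine aux_orbit_mono (hmono ?_) y (hf z hz)
        exact le_trans (Finset.le_sup (f := fun z : {x // x ∈ t} => f z.1 z.2)
          (Finset.mem_attach t ⟨z, hz⟩)) hn
      haveI := hfin n y
      calc N = t.card := htcard.symm
      _ = Nat.card (t : Set Y) := by rw [Nat.card_coe_set_eq, Set.ncard_coe_finset]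
      _ ≤ Nat.card (orbit ↥(H n) y) := Nat.card_mono (Set.toFinite _) hsub
    have := hcard.inv_tendsto_atTop
    refine this.congr fun n => (hFeq n y).symm
  have htend : Tendsto (fun n => ∫ y, F n y ∂ν) atTop (nhds 0) := by
    have h0 : (0:ℝ) = ∫ _, (0:ℝ) ∂ν := by simp
    rw [h0]
    exact tendsto_integral_of_dominated_convergence (fun _ => (1:ℝ))
      (fun n => (hInt n).aestronglyMeasurable) (integrable_const 1)
      (fun n => Filter.Eventually.of_forall (hbound n)) hlim
  constructor
  · simpa only [hval] using htend
  · intro n m hnm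
    simp only [hval]
    exact integral_mono (hInt m) (hInt n) fun y => hptmono hnm y
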